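/- (Correctness of the LTL-to-alternating-automaton translation) For every PNF formula φ, the language of the alternating ω-automaton A(φ) built from the partial derivatives of φ, under the Büchi acceptance condition, equals the set of models of φ: for every infinite word σ : ℕ → Σ, σ ⊨ φ if and only if there is an accepting run of A(φ) on σ. -/

import Mathlib

open scoped Classical

/-- LTL formulae in positive normal form. -/
inductive LTL (AP : Type) : Type
  | pos  : AP → LTL AP                      -- atomic proposition p
  | nneg : AP → LTL AP                      -- negated atomic proposition ¬p
  | tt   : LTL AP
  | ff   : LTL AP
  | conj : LTL AP → LTL AP → LTL AP
  | disj : LTL AP → LTL AP → LTL AP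
  | next : LTL AP → LTL AP
  | untl : LTL AP → LTL AP → LTL AP
  | rels : LTL AP → LTL AP → LTL AP
  deriving DecidableEq

/-- Literals over AP. -/
inductive Lit (AP : Type) : Type
  | pos : AP → Lit AP
  | neg : AP → Lit AP
  deriving DecidableEq

namespace Lit

variable {AP : Type} {S : Type}

/-- Negation of a literal. -/
def negate : Lit AP → Lit AP
  | pos p => neg p
  | neg p => pos p

/-- The LTL formula corresponding to a literal. -/
def toLTL : Lit AP → LTL AP
  | pos p => LTL.pos p
  | neg p => LTL.nneg p

/-- A literal holds at a symbol `x` relative to the interpretation `I`. -/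
def Holds (I : S → Set AP) (x : S) : Lit AP → Prop
  | pos p => p ∈ I x
  | neg p => p ∉ I x

end Lit

/-- A monomial: `none` represents ff, and `some s` a finite set of literals. -/
abbrev Mono (AP : Type) : Type := Option (Finset (Lit AP))

namespace LTL

variable {AP : Type} {S : Type}

/-- Suffix of an infinite word: `suffix σ n = σ[n..]`. -/
def suffix (σ : ℕ → S) (n : ℕ) : ℕ → S := fun i => σ (n + i)

/-- Satisfaction `σ ⊨ φ` of an LTL formula on an infinite word. -/
def Sat (I : S → Set AP) : LTL AP → (ℕ → S) → Prop
  | pos p, σ => p ∈ I (σ 0)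
  | nneg p, σ => p ∉ I (σ 0)
  | tt, _ => True
  | ff, _ => False
  | conj φ ψ, σ => Sat I φ σ ∧ Sat I ψ σ
  | disj φ ψ, σ => Sat I φ σ ∨ Sat I ψ σ
  | next φ, σ => Sat I φ (suffix σ 1)
  | untl φ ψ, σ => ∃ n, (∀ j < n, Sat I φ (suffix σ j)) ∧ Sat I ψ (suffix σ n)
  | rels φ ψ, σ => ∀ n, Sat I ψ (suffix σ n) ∨ ∃ j < n, Sat I φ (suffix σ j)

/-- A monomial is valid if it contains no complementary pair of literals. -/
def MonoValid : Mono AP → Prop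
  | none => True
  | some s => ∀ ℓ ∈ s, ℓ.negate ∉ s

/-- Smart conjunction `μ ⩀ ν` of monomials. -/
noncomputable def scm [DecidableEq AP] : Mono AP → Mono AP → Mono AP
  | some μ, some ν =>
      if ∃ ℓ ∈ μ ∪ ν, Lit.negate ℓ ∈ μ ∪ ν then none else some (μ ∪ ν)
  | _, _ => none

/-- The formula `Θ(μ)` associated with a monomial. -/
noncomputable def Theta : Mono AP → LTL AP
  | none => LTL.ff
  | some s => (s.toList.map Lit.toLTL).foldr LTL.conj LTL.tt

/-- A temporal formula: the outermost connective is neither ∧ nor ∨. -/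
def Temporal : LTL AP → Prop
  | conj _ _ => False
  | disj _ _ => False
  | _ => True

/-- Satisfaction of a formal conjunction `⋀Γ` (a finite set of formulae). -/
def SatConj (I : S → Set AP) (Γ : Finset (LTL AP)) (σ : ℕ → S) : Prop :=
  ∀ χ ∈ Γ, Sat I χ σ

/-- Set-based conjunctive normal form `SIMP`. -/
def SIMP [DecidableEq AP] : LTL AP → Finset (Finset (LTL AP))
  | conj φ ψ => (SIMP φ).biUnion fun Γ => (SIMP ψ).image fun Δ => Γ ∪ Δ
  | disj φ ψ => SIMP φ ∪ SIMP ψ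
  | φ => {{φ}}

/-- Linear factors `LF(φ)`: pairs of a monomial (≠ ff) and a formal conjunction. -/
noncomputable def LF [DecidableEq AP] : LTL AP → Finset (Mono AP × Finset (LTL AP))
  | pos p => {(some {Lit.pos p}, ∅)}
  | nneg p => {(some {Lit.neg p}, ∅)}
  | tt => {(some ∅, ∅)}
  | ff => ∅
  | disj φ ψ => LF φ ∪ LF ψ
  | conj φ ψ =>
      ((LF φ ×ˢ LF ψ).image fun pq => (scm pq.1.1 pq.2.1, pq.1.2 ∪ pq.2.2)).filter
        fun mg => mg.1 ≠ none
  | next φ => (SIMP φ).image fun Γ => ((some ∅ : Mono AP), Γ)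
  | untl φ ψ => LF ψ ∪ (LF φ).image fun mg => (mg.1, insert (untl φ ψ) mg.2)
  | rels φ ψ =>
      (((LF φ ×ˢ LF ψ).image fun pq => (scm pq.1.1 pq.2.1, pq.1.2 ∪ pq.2.2)).filter
        fun mg => mg.1 ≠ none)
      ∪ (LF ψ).image fun mg => (mg.1, insert (rels φ ψ) mg.2)

/-- A symbol satisfies a monomial: `x ⊨ μ`. -/
def MonoHolds (I : S → Set AP) (x : S) : Mono AP → Prop
  | none => False
  | some s => ∀ ℓ ∈ s, Lit.Holds I x ℓ

/-- Direct partial derivatives `∂(φ, x)`. -/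
noncomputable def pd [DecidableEq AP] (I : S → Set AP) : LTL AP → S → Finset (Finset (LTL AP))
  | tt, _ => {∅}
  | ff, _ => ∅
  | pos p, x => if p ∈ I x then {∅} else ∅
  | nneg p, x => if p ∉ I x then {∅} else ∅
  | disj φ ψ, x => pd I φ x ∪ pd I ψ x
  | conj φ ψ, x => ((pd I φ x) ×ˢ (pd I ψ x)).image fun gd => gd.1 ∪ gd.2
  | next φ, _ => SIMP φ
  | untl φ ψ, x => pd I ψ x ∪ (pd I φ x).image fun Γ => insert (untl φ ψ) Γ
  | rels φ ψ, x =>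
      (((pd I φ x) ×ˢ (pd I ψ x)).image fun gd => gd.1 ∪ gd.2)
      ∪ (pd I ψ x).image fun Δ => insert (rels φ ψ) Δ

/-- Iterated partial derivatives `∂⁺(φ)`. -/
def dplus [DecidableEq AP] : LTL AP → Finset (LTL AP)
  | pos p => {pos p}
  | nneg p => {nneg p}
  | tt => {tt}
  | ff => {ff}
  | disj φ ψ => dplus φ ∪ dplus ψ
  | conj φ ψ => dplus φ ∪ dplus ψ
  | next φ => insert (next φ) (dplus φ)
  | untl φ ψ => insert (untl φ ψ) (dplus φ ∪ dplus ψ)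
  | rels φ ψ => insert (rels φ ψ) (dplus φ ∪ dplus ψ)

/-- Size of a formula: number of occurrences of literals, constants and operators. -/
def size : LTL AP → ℕ
  | pos _ => 1
  | nneg _ => 1
  | tt => 1
  | ff => 1
  | conj φ ψ => size φ + size ψ + 1
  | disj φ ψ => size φ + size ψ + 1
  | next φ => size φ + 1
  | untl φ ψ => size φ + size ψ + 1
  | rels φ ψ => size φ + size ψ + 1

/-- Partial derivative of a formal conjunction: `∂(Γ, x)`. -/
def pdC [DecidableEq AP] (I : S → Set AP) (Γ : Finset (LTL AP)) (x : S) :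
    Set (Finset (LTL AP)) :=
  { Δ | ∃ f : LTL AP → Finset (LTL AP), (∀ χ ∈ Γ, f χ ∈ pd I χ x) ∧ Δ = Γ.biUnion f }

/-- The set `D(φ)` of partial derivative descendants of `φ` (smallest set closed
under the two rules). -/
inductive Desc [DecidableEq AP] (I : S → Set AP) (φ : LTL AP) : Finset (LTL AP) → Prop
  | base (x : S) (Γ : Finset (LTL AP)) : Γ ∈ pd I φ x → Desc I φ Γ
  | step (x : S) (Γ Δ : Finset (LTL AP)) : Desc I φ Γ → Δ ∈ pdC I Γ x → Desc I φ Δ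

end LTL

namespace LTL

/-- Accepting states of `A(φ)`: `tt` and formulae of the form `χ R χ'`. -/
def IsAcc {AP : Type} : LTL AP → Prop
  | tt => True
  | rels _ _ => True
  | _ => False

/-- A run of the alternating ω-automaton `A(φ)` on the word `σ`:
a directed graph with vertices in `∂⁺(φ) × ℕ`, level-respecting edges,
initial condition given by `SIMP(φ)`, and transitions given by the
partial derivatives. -/
structure Run {AP S : Type} [DecidableEq AP] (I : S → Set AP) (φ : LTL AP)
    (σ : ℕ → S) where
  V : Set (LTL AP × ℕ)
  E : Set ((LTL AP × ℕ) × (LTL AP × ℕ))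
  states : ∀ v ∈ V, v.1 ∈ dplus φ
  edges_mem : ∀ e ∈ E, e.1 ∈ V ∧ e.2 ∈ V
  edges_level : ∀ e ∈ E, e.2.2 = e.1.2 + 1
  init : ∃ Γ ∈ SIMP φ, {q | (q, (0 : ℕ)) ∈ V} = (↑Γ : Set (LTL AP))
  incoming : ∀ q' i, (q', i + 1) ∈ V → ∃ q, ((q, i), (q', i + 1)) ∈ E
  trans : ∀ q i, (q, i) ∈ V →
    ∃ Δ ∈ pd I q (σ i),
      {q' | ((q, i), (q', i + 1)) ∈ E} = (↑Δ : Set (LTL AP))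

/-- Büchi acceptance: every infinite path in the run visits accepting
states infinitely often. -/
def Run.Accepting {AP S : Type} [DecidableEq AP] {I : S → Set AP} {φ : LTL AP}
    {σ : ℕ → S} (r : Run I φ σ) : Prop :=
  ∀ (k : ℕ) (π : ℕ → LTL AP),
    (∀ n, ((π n, k + n), (π (n + 1), k + n + 1)) ∈ r.E) →
    ∀ m, ∃ n ≥ m, IsAcc (π n)

end LTL

namespace LTLProof
open LTL

set_option linter.unusedSectionVars false

variable {AP S : Type} [DecidableEq AP] {I : S → Set AP}

lemma suffix_zero (σ : ℕ → S) : suffix σ 0 = σ := by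
  funext n; simp [suffix]

lemma suffix_suffix (σ : ℕ → S) (i j : ℕ) : suffix (suffix σ i) j = suffix σ (i + j) := by
  funext n; simp [suffix, Nat.add_assoc]

lemma size_pos (φ : LTL AP) : 1 ≤ size φ := by
  cases φ <;> simp [size]

lemma SIMP_elem_size : ∀ (χ : LTL AP) (Γ : Finset (LTL AP)), Γ ∈ SIMP χ →
    ∀ ψ ∈ Γ, size ψ ≤ size χ := by
  intro χ
  induction χ with
  | conj a b iha ihb =>
    intro Γ hΓ ψ hψ
    simp only [SIMP, Finset.mem_biUnion, Finset.mem_image] at hΓ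
    obtain ⟨Γ₁, h1, Γ₂, h2, rfl⟩ := hΓ
    rcases Finset.mem_union.1 hψ with h | h
    · have := iha Γ₁ h1 ψ h; simp [size]; omega
    · have := ihb Γ₂ h2 ψ h; simp [size]; omega
  | disj a b iha ihb =>
    intro Γ hΓ ψ hψ
    simp only [SIMP, Finset.mem_union] at hΓ
    rcases hΓ with h | h
    · have := iha Γ h ψ hψ; simp [size]; omega
    · have := ihb Γ h ψ hψ; simp [size]; omega
  | pos p =>
    intro Γ hΓ ψ hψ
    simp only [SIMP, Finset.mem_singleton] at hΓ; subst hΓ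
    simp only [Finset.mem_singleton] at hψ; subst hψ; exact le_rfl
  | nneg p =>
    intro Γ hΓ ψ hψ
    simp only [SIMP, Finset.mem_singleton] at hΓ; subst hΓ
    simp only [Finset.mem_singleton] at hψ; subst hψ; exact le_rfl
  | tt =>
    intro Γ hΓ ψ hψ
    simp only [SIMP, Finset.mem_singleton] at hΓ; subst hΓ
    simp only [Finset.mem_singleton] at hψ; subst hψ; exact le_rfl
  | ff =>
    intro Γ hΓ ψ hψ
    simp only [SIMP, Finset.mem_singleton] at hΓ; subst hΓ
    simp only [Finset.mem_singleton] at hψ; subst hψ; exact le_rfl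
  | next a _ =>
    intro Γ hΓ ψ hψ
    simp only [SIMP, Finset.mem_singleton] at hΓ; subst hΓ
    simp only [Finset.mem_singleton] at hψ; subst hψ; exact le_rfl
  | untl a b _ _ =>
    intro Γ hΓ ψ hψ
    simp only [SIMP, Finset.mem_singleton] at hΓ; subst hΓ
    simp only [Finset.mem_singleton] at hψ; subst hψ; exact le_rfl
  | rels a b _ _ =>
    intro Γ hΓ ψ hψ
    simp only [SIMP, Finset.mem_singleton] at hΓ; subst hΓ
    simp only [Finset.mem_singleton] at hψ; subst hψ; exact le_rfl

lemma pd_elem_size : ∀ (χ : LTL AP) (x : S) (Δ : Finset (LTL AP)), Δ ∈ pd I χ x →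
    ∀ ψ ∈ Δ, size ψ ≤ size χ := by
  intro χ
  induction χ with
  | pos p =>
    intro x Δ hΔ ψ hψ
    simp only [pd] at hΔ
    split_ifs at hΔ <;> simp_all
  | nneg p =>
    intro x Δ hΔ ψ hψ
    simp only [pd] at hΔ
    split_ifs at hΔ <;> simp_all
  | tt =>
    intro x Δ hΔ ψ hψ
    simp only [pd, Finset.mem_singleton] at hΔ; simp_all
  | ff =>
    intro x Δ hΔ ψ hψ
    simp [pd] at hΔ
  | conj a b iha ihb =>
    intro x Δ hΔ ψ hψ
    simp only [pd, Finset.mem_image, Finset.mem_product, Prod.exists] at hΔ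
    obtain ⟨Γ₁, Γ₂, ⟨h1, h2⟩, rfl⟩ := hΔ
    rcases Finset.mem_union.1 hψ with h | h
    · have := iha x Γ₁ h1 ψ h; simp [size]; omega
    · have := ihb x Γ₂ h2 ψ h; simp [size]; omega
  | disj a b iha ihb =>
    intro x Δ hΔ ψ hψ
    simp only [pd, Finset.mem_union] at hΔ
    rcases hΔ with h | h
    · have := iha x Δ h ψ hψ; simp [size]; omega
    · have := ihb x Δ h ψ hψ; simp [size]; omega
  | next a _ =>
    intro x Δ hΔ ψ hψ
    simp only [pd] at hΔ
    have := SIMP_elem_size a Δ hΔ ψ hψ; simp [size]; omega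
  | untl a b iha ihb =>
    intro x Δ hΔ ψ hψ
    simp only [pd, Finset.mem_union, Finset.mem_image] at hΔ
    rcases hΔ with h | ⟨Γ, hΓ, rfl⟩
    · have := ihb x Δ h ψ hψ; simp [size]; omega
    · rcases Finset.mem_insert.1 hψ with h | h
      · subst h; exact le_rfl
      · have := iha x Γ hΓ ψ h; simp [size]; omega
  | rels a b iha ihb =>
    intro x Δ hΔ ψ hψ
    simp only [pd, Finset.mem_union, Finset.mem_image, Finset.mem_product, Prod.exists] at hΔ
    rcases hΔ with ⟨Γ₁, Γ₂, ⟨h1, h2⟩, rfl⟩ | ⟨Γ, hΓ, rfl⟩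
    · rcases Finset.mem_union.1 hψ with h | h
      · have := iha x Γ₁ h1 ψ h; simp [size]; omega
      · have := ihb x Γ₂ h2 ψ h; simp [size]; omega
    · rcases Finset.mem_insert.1 hψ with h | h
      · subst h; exact le_rfl
      · have := ihb x Γ hΓ ψ h; simp [size]; omega


lemma SIMP_sound : ∀ (χ : LTL AP) (σ : ℕ → S) (Γ : Finset (LTL AP)), Γ ∈ SIMP χ →
    SatConj I Γ σ → Sat I χ σ := by
  intro χ
  induction χ with
  | conj a b iha ihb =>
    intro σ Γ hΓ hs
    simp only [SIMP, Finset.mem_biUnion, Finset.mem_image] at hΓ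
    obtain ⟨Γ₁, h1, Γ₂, h2, rfl⟩ := hΓ
    exact ⟨iha σ Γ₁ h1 (fun ψ hψ => hs ψ (Finset.mem_union_left _ hψ)),
           ihb σ Γ₂ h2 (fun ψ hψ => hs ψ (Finset.mem_union_right _ hψ))⟩
  | disj a b iha ihb =>
    intro σ Γ hΓ hs
    simp only [SIMP, Finset.mem_union] at hΓ
    rcases hΓ with h | h
    · exact Or.inl (iha σ Γ h hs)
    · exact Or.inr (ihb σ Γ h hs)
  | pos p =>
    intro σ Γ hΓ hs
    simp only [SIMP, Finset.mem_singleton] at hΓ; subst hΓ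
    exact hs _ (Finset.mem_singleton_self _)
  | nneg p =>
    intro σ Γ hΓ hs
    simp only [SIMP, Finset.mem_singleton] at hΓ; subst hΓ
    exact hs _ (Finset.mem_singleton_self _)
  | tt =>
    intro σ Γ hΓ hs; trivial
  | ff =>
    intro σ Γ hΓ hs
    simp only [SIMP, Finset.mem_singleton] at hΓ; subst hΓ
    exact hs _ (Finset.mem_singleton_self _)
  | next a _ =>
    intro σ Γ hΓ hs
    simp only [SIMP, Finset.mem_singleton] at hΓ; subst hΓ
    exact hs _ (Finset.mem_singleton_self _)
  | untl a b _ _ =>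
    intro σ Γ hΓ hs
    simp only [SIMP, Finset.mem_singleton] at hΓ; subst hΓ
    exact hs _ (Finset.mem_singleton_self _)
  | rels a b _ _ =>
    intro σ Γ hΓ hs
    simp only [SIMP, Finset.mem_singleton] at hΓ; subst hΓ
    exact hs _ (Finset.mem_singleton_self _)

lemma SIMP_complete : ∀ (χ : LTL AP) (σ : ℕ → S), Sat I χ σ →
    ∃ Γ ∈ SIMP χ, SatConj I Γ σ := by
  intro χ
  induction χ with
  | conj a b iha ihb =>
    intro σ hs
    obtain ⟨h1, h2⟩ := hs
    obtain ⟨Γ₁, hΓ₁, hs₁⟩ := iha σ h1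
    obtain ⟨Γ₂, hΓ₂, hs₂⟩ := ihb σ h2
    refine ⟨Γ₁ ∪ Γ₂, ?_, ?_⟩
    · simp only [SIMP, Finset.mem_biUnion, Finset.mem_image]
      exact ⟨Γ₁, hΓ₁, Γ₂, hΓ₂, rfl⟩
    · intro ψ hψ
      rcases Finset.mem_union.1 hψ with h | h
      · exact hs₁ ψ h
      · exact hs₂ ψ h
  | disj a b iha ihb =>
    intro σ hs
    rcases hs with h | h
    · obtain ⟨Γ, hΓ, hsc⟩ := iha σ h
      exact ⟨Γ, Finset.mem_union_left _ hΓ, hsc⟩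
    · obtain ⟨Γ, hΓ, hsc⟩ := ihb σ h
      exact ⟨Γ, Finset.mem_union_right _ hΓ, hsc⟩
  | pos p =>
    intro σ hs
    exact ⟨{LTL.pos p}, Finset.mem_singleton_self _, fun ψ hψ => by
      simp only [Finset.mem_singleton] at hψ; subst hψ; exact hs⟩
  | nneg p =>
    intro σ hs
    exact ⟨{LTL.nneg p}, Finset.mem_singleton_self _, fun ψ hψ => by
      simp only [Finset.mem_singleton] at hψ; subst hψ; exact hs⟩
  | tt =>
    intro σ hs
    exact ⟨{LTL.tt}, Finset.mem_singleton_self _, fun ψ hψ => by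
      simp only [Finset.mem_singleton] at hψ; subst hψ; exact hs⟩
  | ff =>
    intro σ hs; exact absurd hs id
  | next a _ =>
    intro σ hs
    exact ⟨{LTL.next a}, Finset.mem_singleton_self _, fun ψ hψ => by
      simp only [Finset.mem_singleton] at hψ; subst hψ; exact hs⟩
  | untl a b _ _ =>
    intro σ hs
    exact ⟨{LTL.untl a b}, Finset.mem_singleton_self _, fun ψ hψ => by
      simp only [Finset.mem_singleton] at hψ; subst hψ; exact hs⟩
  | rels a b _ _ =>
    intro σ hs
    exact ⟨{LTL.rels a b}, Finset.mem_singleton_self _, fun ψ hψ => by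
      simp only [Finset.mem_singleton] at hψ; subst hψ; exact hs⟩

lemma untl_step {a b : LTL AP} {σ : ℕ → S} (ha : Sat I a σ)
    (h : Sat I (LTL.untl a b) (suffix σ 1)) : Sat I (LTL.untl a b) σ := by
  obtain ⟨n, h1, h2⟩ := h
  refine ⟨n + 1, ?_, ?_⟩
  · intro j hj
    cases j with
    | zero => rw [suffix_zero]; exact ha
    | succ m =>
      have := h1 m (by omega)
      rwa [suffix_suffix, Nat.add_comm 1 m] at this
  · rwa [suffix_suffix, Nat.add_comm 1 n] at h2

lemma untl_tail {a b : LTL AP} {σ : ℕ → S} (h : Sat I (LTL.untl a b) σ)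
    (hb : ¬ Sat I b σ) : Sat I a σ ∧ Sat I (LTL.untl a b) (suffix σ 1) := by
  obtain ⟨n, h1, h2⟩ := h
  cases n with
  | zero => rw [suffix_zero] at h2; exact absurd h2 hb
  | succ m =>
    refine ⟨by have := h1 0 (by omega); rwa [suffix_zero] at this, m, ?_, ?_⟩
    · intro j hj
      rw [suffix_suffix, Nat.add_comm 1 j]
      exact h1 (j + 1) (by omega)
    · rw [suffix_suffix, Nat.add_comm 1 m]
      exact h2

lemma rels_head {a b : LTL AP} {σ : ℕ → S} (h : Sat I (LTL.rels a b) σ) : Sat I b σ := by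
  rcases h 0 with h' | ⟨j, hj, _⟩
  · rwa [suffix_zero] at h'
  · omega

lemma rels_step {a b : LTL AP} {σ : ℕ → S} (hb : Sat I b σ)
    (h : Sat I (LTL.rels a b) (suffix σ 1)) : Sat I (LTL.rels a b) σ := by
  intro n
  cases n with
  | zero => exact Or.inl (by rw [suffix_zero]; exact hb)
  | succ m =>
    rcases h m with h' | ⟨j, hj, h'⟩
    · left; rwa [suffix_suffix, Nat.add_comm 1 m] at h'
    · right; exact ⟨j + 1, by omega, by rwa [suffix_suffix, Nat.add_comm 1 j] at h'⟩

lemma rels_tail {a b : LTL AP} {σ : ℕ → S} (h : Sat I (LTL.rels a b) σ)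
    (ha : ¬ Sat I a σ) : Sat I (LTL.rels a b) (suffix σ 1) := by
  intro n
  rcases h (n + 1) with h' | ⟨j, hj, h'⟩
  · left; rwa [suffix_suffix, Nat.add_comm 1 n]
  · cases j with
    | zero => rw [suffix_zero] at h'; exact absurd h' ha
    | succ m =>
      right
      exact ⟨m, by omega, by rw [suffix_suffix, Nat.add_comm 1 m]; exact h'⟩

lemma conj_sat_prod {σ : ℕ → S} {Γ₁ Γ₂ : Finset (LTL AP)}
    (h1 : SatConj I Γ₁ σ) (h2 : SatConj I Γ₂ σ) : SatConj I (Γ₁ ∪ Γ₂) σ := by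
  intro ψ hψ
  rcases Finset.mem_union.1 hψ with h | h
  · exact h1 ψ h
  · exact h2 ψ h

lemma pd_sound : ∀ (χ : LTL AP) (σ : ℕ → S) (Δ : Finset (LTL AP)),
    Δ ∈ pd I χ (σ 0) → SatConj I Δ (suffix σ 1) → Sat I χ σ := by
  intro χ
  induction χ with
  | pos p =>
    intro σ Δ hΔ _
    simp only [pd] at hΔ
    split_ifs at hΔ with h
    · exact h
    · simp at hΔ
  | nneg p =>
    intro σ Δ hΔ _
    simp only [pd] at hΔ
    split_ifs at hΔ with h
    · simp at hΔ
    · exact h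
  | tt => intro σ Δ hΔ _; trivial
  | ff => intro σ Δ hΔ _; simp [pd] at hΔ
  | conj a b iha ihb =>
    intro σ Δ hΔ hs
    simp only [pd, Finset.mem_image, Finset.mem_product, Prod.exists] at hΔ
    obtain ⟨Γ₁, Γ₂, ⟨h1, h2⟩, rfl⟩ := hΔ
    exact ⟨iha σ Γ₁ h1 (fun ψ hψ => hs ψ (Finset.mem_union_left _ hψ)),
           ihb σ Γ₂ h2 (fun ψ hψ => hs ψ (Finset.mem_union_right _ hψ))⟩
  | disj a b iha ihb =>
    intro σ Δ hΔ hs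
    simp only [pd, Finset.mem_union] at hΔ
    rcases hΔ with h | h
    · exact Or.inl (iha σ Δ h hs)
    · exact Or.inr (ihb σ Δ h hs)
  | next a _ =>
    intro σ Δ hΔ hs
    simp only [pd] at hΔ
    exact SIMP_sound a (suffix σ 1) Δ hΔ hs
  | untl a b iha ihb =>
    intro σ Δ hΔ hs
    simp only [pd, Finset.mem_union, Finset.mem_image] at hΔ
    rcases hΔ with h | ⟨Γ, hΓ, rfl⟩
    · exact ⟨0, by omega, by rw [suffix_zero]; exact ihb σ Δ h hs⟩
    · have hq : Sat I (LTL.untl a b) (suffix σ 1) := hs _ (Finset.mem_insert_self _ _)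
      have ha : Sat I a σ :=
        iha σ Γ hΓ (fun ψ hψ => hs ψ (Finset.mem_insert_of_mem hψ))
      exact untl_step ha hq
  | rels a b iha ihb =>
    intro σ Δ hΔ hs
    simp only [pd, Finset.mem_union, Finset.mem_image, Finset.mem_product, Prod.exists] at hΔ
    rcases hΔ with ⟨Γ₁, Γ₂, ⟨h1, h2⟩, rfl⟩ | ⟨Γ, hΓ, rfl⟩
    · have ha : Sat I a σ := iha σ Γ₁ h1 (fun ψ hψ => hs ψ (Finset.mem_union_left _ hψ))
      have hb : Sat I b σ := ihb σ Γ₂ h2 (fun ψ hψ => hs ψ (Finset.mem_union_right _ hψ))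
      intro n
      cases n with
      | zero => exact Or.inl (by rw [suffix_zero]; exact hb)
      | succ m => exact Or.inr ⟨0, by omega, by rw [suffix_zero]; exact ha⟩
    · have hq : Sat I (LTL.rels a b) (suffix σ 1) := hs _ (Finset.mem_insert_self _ _)
      have hb : Sat I b σ :=
        ihb σ Γ hΓ (fun ψ hψ => hs ψ (Finset.mem_insert_of_mem hψ))
      exact rels_step hb hq

lemma pd_complete : ∀ (χ : LTL AP) (σ : ℕ → S), Sat I χ σ →
    ∃ Δ ∈ pd I χ (σ 0), SatConj I Δ (suffix σ 1) ∧
      ∀ a b, χ = LTL.untl a b → Sat I b σ → LTL.untl a b ∉ Δ := by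
  intro χ
  induction χ with
  | pos p =>
    intro σ hs
    refine ⟨∅, ?_, fun ψ hψ => by simp at hψ, fun a b h => by simp at h⟩
    have hs' : p ∈ I (σ 0) := hs
    simp only [pd]; rw [if_pos hs']; exact Finset.mem_singleton_self _
  | nneg p =>
    intro σ hs
    refine ⟨∅, ?_, fun ψ hψ => by simp at hψ, fun a b h => by simp at h⟩
    have hs' : p ∉ I (σ 0) := hs
    simp only [pd]; rw [if_pos hs']; exact Finset.mem_singleton_self _
  | tt =>
    intro σ _
    exact ⟨∅, by simp [pd], fun ψ hψ => by simp at hψ, fun a b h => by simp at h⟩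
  | ff => intro σ hs; exact absurd hs id
  | conj a b iha ihb =>
    intro σ hs
    obtain ⟨Δ₁, h1, hs1, _⟩ := iha σ hs.1
    obtain ⟨Δ₂, h2, hs2, _⟩ := ihb σ hs.2
    refine ⟨Δ₁ ∪ Δ₂, ?_, conj_sat_prod hs1 hs2, fun a' b' h => by simp at h⟩
    simp only [pd, Finset.mem_image, Finset.mem_product, Prod.exists]
    exact ⟨Δ₁, Δ₂, ⟨h1, h2⟩, rfl⟩
  | disj a b iha ihb =>
    intro σ hs
    rcases hs with h | h
    · obtain ⟨Δ, h1, hs1, _⟩ := iha σ h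
      exact ⟨Δ, by simp only [pd, Finset.mem_union]; exact Or.inl h1, hs1,
        fun a' b' h => by simp at h⟩
    · obtain ⟨Δ, h1, hs1, _⟩ := ihb σ h
      exact ⟨Δ, by simp only [pd, Finset.mem_union]; exact Or.inr h1, hs1,
        fun a' b' h => by simp at h⟩
  | next a _ =>
    intro σ hs
    obtain ⟨Γ, hΓ, hsc⟩ := SIMP_complete a (suffix σ 1) hs
    exact ⟨Γ, by simp only [pd]; exact hΓ, hsc, fun a' b' h => by simp at h⟩
  | untl a b iha ihb =>
    intro σ hs
    by_cases hb : Sat I b σ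
    · obtain ⟨Δ, h1, hs1, _⟩ := ihb σ hb
      refine ⟨Δ, ?_, hs1, ?_⟩
      · simp only [pd, Finset.mem_union]; exact Or.inl h1
      · intro a' b' heq _
        rw [← heq]
        intro hmem
        have := pd_elem_size b (σ 0) Δ h1 _ hmem
        have hpa := size_pos a
        simp [size] at this
    · obtain ⟨ha, hq⟩ := untl_tail hs hb
      obtain ⟨Γ, h1, hs1, _⟩ := iha σ ha
      refine ⟨insert (LTL.untl a b) Γ, ?_, ?_, ?_⟩
      · simp only [pd, Finset.mem_union, Finset.mem_image]
        exact Or.inr ⟨Γ, h1, rfl⟩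
      · intro ψ hψ
        rcases Finset.mem_insert.1 hψ with h | h
        · subst h; exact hq
        · exact hs1 ψ h
      · intro a' b' heq hb'
        injection heq with h1' h2'
        rw [← h2'] at hb'
        exact absurd hb' hb
  | rels a b iha ihb =>
    intro σ hs
    have hb : Sat I b σ := rels_head hs
    obtain ⟨Δ₂, h2, hs2, _⟩ := ihb σ hb
    by_cases ha : Sat I a σ
    · obtain ⟨Δ₁, h1, hs1, _⟩ := iha σ ha
      refine ⟨Δ₁ ∪ Δ₂, ?_, conj_sat_prod hs1 hs2, fun a' b' h => by simp at h⟩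
      simp only [pd, Finset.mem_union, Finset.mem_image, Finset.mem_product, Prod.exists]
      exact Or.inl ⟨Δ₁, Δ₂, ⟨h1, h2⟩, rfl⟩
    · have hq : Sat I (LTL.rels a b) (suffix σ 1) := rels_tail hs ha
      refine ⟨insert (LTL.rels a b) Δ₂, ?_, ?_, fun a' b' h => by simp at h⟩
      · simp only [pd, Finset.mem_union, Finset.mem_image]
        exact Or.inr ⟨Δ₂, h2, rfl⟩
      · intro ψ hψ
        rcases Finset.mem_insert.1 hψ with h | h
        · subst h; exact hq
        · exact hs2 ψ h


lemma dplus_temporal : ∀ (φ χ : LTL AP), χ ∈ dplus φ → Temporal χ := by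
  intro φ
  induction φ with
  | pos p => intro χ h; simp only [dplus, Finset.mem_singleton] at h; subst h; trivial
  | nneg p => intro χ h; simp only [dplus, Finset.mem_singleton] at h; subst h; trivial
  | tt => intro χ h; simp only [dplus, Finset.mem_singleton] at h; subst h; trivial
  | ff => intro χ h; simp only [dplus, Finset.mem_singleton] at h; subst h; trivial
  | conj a b iha ihb =>
    intro χ h
    rcases Finset.mem_union.1 h with h | h
    · exact iha χ h
    · exact ihb χ h
  | disj a b iha ihb =>
    intro χ h
    rcases Finset.mem_union.1 h with h | h
    · exact iha χ h
    · exact ihb χ h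
  | next a iha =>
    intro χ h
    rcases Finset.mem_insert.1 h with h | h
    · subst h; trivial
    · exact iha χ h
  | untl a b iha ihb =>
    intro χ h
    rcases Finset.mem_insert.1 h with h | h
    · subst h; trivial
    · rcases Finset.mem_union.1 h with h | h
      · exact iha χ h
      · exact ihb χ h
  | rels a b iha ihb =>
    intro χ h
    rcases Finset.mem_insert.1 h with h | h
    · subst h; trivial
    · rcases Finset.mem_union.1 h with h | h
      · exact iha χ h
      · exact ihb χ h

lemma dplus_trans : ∀ (φ χ : LTL AP), χ ∈ dplus φ → dplus χ ⊆ dplus φ := by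
  intro φ
  induction φ with
  | pos p =>
    intro χ h; simp only [dplus, Finset.mem_singleton] at h; subst h
    exact Finset.Subset.refl _
  | nneg p =>
    intro χ h; simp only [dplus, Finset.mem_singleton] at h; subst h
    exact Finset.Subset.refl _
  | tt =>
    intro χ h; simp only [dplus, Finset.mem_singleton] at h; subst h
    exact Finset.Subset.refl _
  | ff =>
    intro χ h; simp only [dplus, Finset.mem_singleton] at h; subst h
    exact Finset.Subset.refl _
  | conj a b iha ihb =>
    intro χ h
    rcases Finset.mem_union.1 h with h | h
    · exact (iha χ h).trans Finset.subset_union_left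
    · exact (ihb χ h).trans Finset.subset_union_right
  | disj a b iha ihb =>
    intro χ h
    rcases Finset.mem_union.1 h with h | h
    · exact (iha χ h).trans Finset.subset_union_left
    · exact (ihb χ h).trans Finset.subset_union_right
  | next a iha =>
    intro χ h
    rcases Finset.mem_insert.1 h with h | h
    · subst h; exact Finset.Subset.refl _
    · exact (iha χ h).trans (Finset.subset_insert _ _)
  | untl a b iha ihb =>
    intro χ h
    rcases Finset.mem_insert.1 h with h | h
    · subst h; exact Finset.Subset.refl _
    · rcases Finset.mem_union.1 h with h | h
      · exact ((iha χ h).trans Finset.subset_union_left).trans (Finset.subset_insert _ _)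
      · exact ((ihb χ h).trans Finset.subset_union_right).trans (Finset.subset_insert _ _)
  | rels a b iha ihb =>
    intro χ h
    rcases Finset.mem_insert.1 h with h | h
    · subst h; exact Finset.Subset.refl _
    · rcases Finset.mem_union.1 h with h | h
      · exact ((iha χ h).trans Finset.subset_union_left).trans (Finset.subset_insert _ _)
      · exact ((ihb χ h).trans Finset.subset_union_right).trans (Finset.subset_insert _ _)

lemma SIMP_subset_dplus : ∀ (χ : LTL AP) (Γ : Finset (LTL AP)), Γ ∈ SIMP χ → Γ ⊆ dplus χ := by
  intro χ
  induction χ with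
  | conj a b iha ihb =>
    intro Γ hΓ
    simp only [SIMP, Finset.mem_biUnion, Finset.mem_image] at hΓ
    obtain ⟨Γ₁, h1, Γ₂, h2, rfl⟩ := hΓ
    exact Finset.union_subset ((iha Γ₁ h1).trans Finset.subset_union_left)
      ((ihb Γ₂ h2).trans Finset.subset_union_right)
  | disj a b iha ihb =>
    intro Γ hΓ
    simp only [SIMP, Finset.mem_union] at hΓ
    rcases hΓ with h | h
    · exact (iha Γ h).trans Finset.subset_union_left
    · exact (ihb Γ h).trans Finset.subset_union_right
  | pos p =>
    intro Γ hΓ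
    simp only [SIMP, Finset.mem_singleton] at hΓ; subst hΓ
    exact Finset.Subset.refl _
  | nneg p =>
    intro Γ hΓ
    simp only [SIMP, Finset.mem_singleton] at hΓ; subst hΓ
    exact Finset.Subset.refl _
  | tt =>
    intro Γ hΓ
    simp only [SIMP, Finset.mem_singleton] at hΓ; subst hΓ
    exact Finset.Subset.refl _
  | ff =>
    intro Γ hΓ
    simp only [SIMP, Finset.mem_singleton] at hΓ; subst hΓ
    exact Finset.Subset.refl _
  | next a _ =>
    intro Γ hΓ
    simp only [SIMP, Finset.mem_singleton] at hΓ; subst hΓ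
    intro ψ hψ
    simp only [Finset.mem_singleton] at hψ; subst hψ
    exact Finset.mem_insert_self _ _
  | untl a b _ _ =>
    intro Γ hΓ
    simp only [SIMP, Finset.mem_singleton] at hΓ; subst hΓ
    intro ψ hψ
    simp only [Finset.mem_singleton] at hψ; subst hψ
    exact Finset.mem_insert_self _ _
  | rels a b _ _ =>
    intro Γ hΓ
    simp only [SIMP, Finset.mem_singleton] at hΓ; subst hΓ
    intro ψ hψ
    simp only [Finset.mem_singleton] at hψ; subst hψ
    exact Finset.mem_insert_self _ _

lemma pd_subset_dplus : ∀ (χ : LTL AP) (x : S) (Δ : Finset (LTL AP)),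
    Δ ∈ pd I χ x → Δ ⊆ dplus χ := by
  intro χ
  induction χ with
  | pos p =>
    intro x Δ hΔ
    simp only [pd] at hΔ
    split_ifs at hΔ <;> simp_all
  | nneg p =>
    intro x Δ hΔ
    simp only [pd] at hΔ
    split_ifs at hΔ <;> simp_all
  | tt =>
    intro x Δ hΔ
    simp only [pd, Finset.mem_singleton] at hΔ; simp_all
  | ff => intro x Δ hΔ; simp [pd] at hΔ
  | conj a b iha ihb =>
    intro x Δ hΔ
    simp only [pd, Finset.mem_image, Finset.mem_product, Prod.exists] at hΔ
    obtain ⟨Γ₁, Γ₂, ⟨h1, h2⟩, rfl⟩ := hΔ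
    exact Finset.union_subset ((iha x Γ₁ h1).trans Finset.subset_union_left)
      ((ihb x Γ₂ h2).trans Finset.subset_union_right)
  | disj a b iha ihb =>
    intro x Δ hΔ
    simp only [pd, Finset.mem_union] at hΔ
    rcases hΔ with h | h
    · exact (iha x Δ h).trans Finset.subset_union_left
    · exact (ihb x Δ h).trans Finset.subset_union_right
  | next a _ =>
    intro x Δ hΔ
    simp only [pd] at hΔ
    exact (SIMP_subset_dplus a Δ hΔ).trans (Finset.subset_insert _ _)
  | untl a b iha ihb =>
    intro x Δ hΔ
    simp only [pd, Finset.mem_union, Finset.mem_image] at hΔ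
    rcases hΔ with h | ⟨Γ, hΓ, rfl⟩
    · exact ((ihb x Δ h).trans Finset.subset_union_right).trans (Finset.subset_insert _ _)
    · exact Finset.insert_subset (Finset.mem_insert_self _ _)
        (((iha x Γ hΓ).trans Finset.subset_union_left).trans (Finset.subset_insert _ _))
  | rels a b iha ihb =>
    intro x Δ hΔ
    simp only [pd, Finset.mem_union, Finset.mem_image, Finset.mem_product, Prod.exists] at hΔ
    rcases hΔ with ⟨Γ₁, Γ₂, ⟨h1, h2⟩, rfl⟩ | ⟨Γ, hΓ, rfl⟩
    · exact (Finset.union_subset ((iha x Γ₁ h1).trans Finset.subset_union_left)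
        ((ihb x Γ₂ h2).trans Finset.subset_union_right)).trans (Finset.subset_insert _ _)
    · exact Finset.insert_subset (Finset.mem_insert_self _ _)
        (((ihb x Γ hΓ).trans Finset.subset_union_right).trans (Finset.subset_insert _ _))

lemma eventually_const (f : ℕ → ℕ) (hf : ∀ a b, a ≤ b → f b ≤ f a) :
    ∀ m, ∃ m' ≥ m, ∀ n ≥ m', f n = f m' := by
  have key : ∀ k m, f m = k → ∃ m' ≥ m, ∀ n ≥ m', f n = f m' := by
    intro k
    induction k using Nat.strong_induction_on with
    | _ k ih =>
      intro m hk
      by_cases h : ∀ n ≥ m, f n = f m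
      · exact ⟨m, le_rfl, fun n hn => h n hn⟩
      · push_neg at h
        obtain ⟨n, hnm, hne⟩ := h
        have hlt : f n < f m := lt_of_le_of_ne (hf m n hnm) hne
        obtain ⟨m', hm', hconst⟩ := ih (f n) (hk ▸ hlt) n rfl
        exact ⟨m', le_trans hnm hm', hconst⟩
  exact fun m => key (f m) m rfl


lemma run_sat {φ : LTL AP} {σ : ℕ → S} (r : Run I φ σ) (hacc : r.Accepting) :
    ∀ N q i, size q ≤ N → (q, i) ∈ r.V → Sat I q (suffix σ i) := by
  obtain ⟨D, hD, hE⟩ : ∃ D : ∀ q i, (q, i) ∈ r.V → Finset (LTL AP),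
      (∀ q i h, D q i h ∈ pd I q (σ i)) ∧
      (∀ q i h, {q' | ((q, i), (q', i + 1)) ∈ r.E} = (↑(D q i h) : Set (LTL AP))) := by
    choose D h1 h2 using r.trans
    exact ⟨D, h1, h2⟩
  have hedge : ∀ q i (h : (q, i) ∈ r.V) q', q' ∈ D q i h → ((q, i), (q', i + 1)) ∈ r.E := by
    intro q i h q' hq'
    have := hE q i h
    rw [Set.ext_iff] at this
    exact (this q').2 hq'
  have hnext : ∀ q i (h : (q, i) ∈ r.V) q', q' ∈ D q i h → (q', i + 1) ∈ r.V := by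
    intro q i h q' hq'
    exact (r.edges_mem _ (hedge q i h q' hq')).2
  intro N
  induction N with
  | zero =>
    intro q i hsz _
    have := size_pos q; omega
  | succ N ih =>
    intro q i hsz hv
    have sat_of_small : ∀ (j : ℕ) (Δ : Finset (LTL AP)) (ψ : LTL AP), size ψ ≤ N →
        Δ ∈ pd I ψ (σ j) → (∀ θ ∈ Δ, (θ, j + 1) ∈ r.V) → Sat I ψ (suffix σ j) := by
      intro j Δ ψ hψ hΔ hmem
      have h0 : (suffix σ j) 0 = σ j := by simp [suffix]
      apply pd_sound ψ (suffix σ j) Δ (by rw [h0]; exact hΔ)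
      rw [suffix_suffix]
      intro θ hθ
      exact ih θ (j + 1) (le_trans (pd_elem_size ψ (σ j) Δ hΔ θ hθ) hψ) (hmem θ hθ)
    cases q with
    | tt => trivial
    | ff =>
      have := hD _ _ hv
      simp [pd] at this
    | pos p =>
      have h1 := hD _ _ hv
      simp only [pd] at h1
      split_ifs at h1 with h
      · show p ∈ I (suffix σ i 0); simpa [suffix] using h
      · simp at h1
    | nneg p =>
      have h1 := hD _ _ hv
      simp only [pd] at h1
      split_ifs at h1 with h
      · simp at h1
      · show p ∉ I (suffix σ i 0); simpa [suffix] using h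
    | conj a b =>
      have := dplus_temporal φ _ (r.states _ hv)
      simp [Temporal] at this
    | disj a b =>
      have := dplus_temporal φ _ (r.states _ hv)
      simp [Temporal] at this
    | next a =>
      have h1 := hD _ _ hv
      simp only [pd] at h1
      have hsa : size a ≤ N := by simp [size] at hsz; omega
      have hsc : SatConj I (D _ _ hv) (suffix σ (i + 1)) := by
        intro θ hθ
        exact ih θ (i + 1) (le_trans (SIMP_elem_size a _ h1 θ hθ) hsa) (hnext _ _ hv θ hθ)
      have := SIMP_sound a (suffix σ (i + 1)) _ h1 hsc
      show Sat I a (suffix (suffix σ i) 1)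
      rwa [suffix_suffix]
    | untl a b =>
      have hsa : size a ≤ N := by have := size_pos b; simp [size] at hsz; omega
      have hsb : size b ≤ N := by have := size_pos a; simp [size] at hsz; omega
      have branch : ∀ j (h : (LTL.untl a b, j) ∈ r.V),
          D _ j h ∈ pd I b (σ j) ∨
          (LTL.untl a b ∈ D _ j h ∧ ∃ Γ ∈ pd I a (σ j), D _ j h = insert (LTL.untl a b) Γ) := by
        intro j h
        have hm := hD _ j h
        simp only [pd, Finset.mem_union, Finset.mem_image] at hm
        rcases hm with hm | ⟨Γ, hΓ, hΓe⟩
        · exact Or.inl hm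
        · exact Or.inr ⟨hΓe ▸ Finset.mem_insert_self _ _, Γ, hΓ, hΓe.symm⟩
      by_cases hall : ∀ n, ∃ h : (LTL.untl a b, i + n) ∈ r.V,
          D _ (i + n) h ∉ pd I b (σ (i + n))
      · exfalso
        have hpath : ∀ n, ((LTL.untl a b, i + n), (LTL.untl a b, i + n + 1)) ∈ r.E := by
          intro n
          obtain ⟨h, hnb⟩ := hall n
          rcases branch (i + n) h with hc | ⟨hc, _⟩
          · exact absurd hc hnb
          · exact hedge _ _ h _ hc
        obtain ⟨n, _, hn⟩ := hacc i (fun _ => LTL.untl a b) (fun n => hpath n) 0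
        simp [IsAcc] at hn
      · have hex : ∃ n, ¬ ∃ h : (LTL.untl a b, i + n) ∈ r.V,
            D _ (i + n) h ∉ pd I b (σ (i + n)) := not_forall.mp hall
        set n₀ := Nat.find hex with hn₀
        have hmin : ∀ j < n₀, ∃ h : (LTL.untl a b, i + j) ∈ r.V,
            D _ (i + j) h ∉ pd I b (σ (i + j)) :=
          fun j hj => not_not.mp (Nat.find_min hex hj)
        have hVn : (LTL.untl a b, i + n₀) ∈ r.V := by
          rcases Nat.eq_zero_or_pos n₀ with h0 | h0
          · rw [h0]; simpa using hv
          · obtain ⟨h, hnb⟩ := hmin (n₀ - 1) (by omega)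
            rcases branch _ h with hc | ⟨hc, _⟩
            · exact absurd hc hnb
            · have := hnext _ _ h _ hc
              have he : i + (n₀ - 1) + 1 = i + n₀ := by omega
              rwa [he] at this
        have hstop : D _ (i + n₀) hVn ∈ pd I b (σ (i + n₀)) := by
          by_contra hc
          exact Nat.find_spec hex ⟨hVn, hc⟩
        have hsatb : Sat I b (suffix σ (i + n₀)) :=
          sat_of_small (i + n₀) _ b hsb hstop (fun θ hθ => hnext _ _ hVn θ hθ)
        have hsata : ∀ j < n₀, Sat I a (suffix σ (i + j)) := by
          intro j hj
          obtain ⟨h, hnb⟩ := hmin j hj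
          rcases branch _ h with hc | ⟨_, Γ, hΓ, hDe⟩
          · exact absurd hc hnb
          · refine sat_of_small (i + j) Γ a hsa hΓ ?_
            intro θ hθ
            exact hnext _ _ h θ (hDe ▸ Finset.mem_insert_of_mem hθ)
        refine ⟨n₀, ?_, ?_⟩
        · intro j hj; rw [suffix_suffix]; exact hsata j hj
        · rw [suffix_suffix]; exact hsatb
    | rels a b =>
      have hsa : size a ≤ N := by have := size_pos b; simp [size] at hsz; omega
      have hsb : size b ≤ N := by have := size_pos a; simp [size] at hsz; omega
      have branch : ∀ j (h : (LTL.rels a b, j) ∈ r.V),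
          (∃ Γ ∈ pd I a (σ j), ∃ Δ ∈ pd I b (σ j), D _ j h = Γ ∪ Δ) ∨
          (LTL.rels a b ∈ D _ j h ∧ ∃ Δ ∈ pd I b (σ j), D _ j h = insert (LTL.rels a b) Δ) := by
        intro j h
        have hm := hD _ j h
        simp only [pd, Finset.mem_union, Finset.mem_image, Finset.mem_product,
          Prod.exists] at hm
        rcases hm with ⟨Γ, Δ, ⟨h1, h2⟩, he⟩ | ⟨Δ, hΔ, he⟩
        · exact Or.inl ⟨Γ, h1, Δ, h2, he.symm⟩
        · exact Or.inr ⟨he ▸ Finset.mem_insert_self _ _, Δ, hΔ, he.symm⟩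
      have satb_of_ins : ∀ j (h : (LTL.rels a b, j) ∈ r.V) (Δ : Finset (LTL AP)),
          Δ ∈ pd I b (σ j) → D _ j h = insert (LTL.rels a b) Δ →
          Sat I b (suffix σ j) := by
        intro j h Δ hΔ hDe
        refine sat_of_small j Δ b hsb hΔ ?_
        intro θ hθ
        exact hnext _ _ h θ (hDe ▸ Finset.mem_insert_of_mem hθ)
      by_cases hall : ∀ n, ∃ h : (LTL.rels a b, i + n) ∈ r.V,
          ¬ ∃ Γ ∈ pd I a (σ (i + n)), ∃ Δ ∈ pd I b (σ (i + n)), D _ (i + n) h = Γ ∪ Δ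
      · intro n
        left
        rw [suffix_suffix]
        obtain ⟨h, hnp⟩ := hall n
        rcases branch _ h with hc | ⟨_, Δ, hΔ, hDe⟩
        · exact absurd hc hnp
        · exact satb_of_ins _ h Δ hΔ hDe
      · have hex : ∃ n, ¬ ∃ h : (LTL.rels a b, i + n) ∈ r.V,
            ¬ ∃ Γ ∈ pd I a (σ (i + n)), ∃ Δ ∈ pd I b (σ (i + n)), D _ (i + n) h = Γ ∪ Δ :=
          not_forall.mp hall
        set n₀ := Nat.find hex with hn₀
        have hmin : ∀ j < n₀, ∃ h : (LTL.rels a b, i + j) ∈ r.V,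
            ¬ ∃ Γ ∈ pd I a (σ (i + j)), ∃ Δ ∈ pd I b (σ (i + j)), D _ (i + j) h = Γ ∪ Δ :=
          fun j hj => not_not.mp (Nat.find_min hex hj)
        have hVn : (LTL.rels a b, i + n₀) ∈ r.V := by
          rcases Nat.eq_zero_or_pos n₀ with h0 | h0
          · rw [h0]; simpa using hv
          · obtain ⟨h, hnp⟩ := hmin (n₀ - 1) (by omega)
            rcases branch _ h with hc | ⟨hc, _⟩
            · exact absurd hc hnp
            · have := hnext _ _ h _ hc
              have he : i + (n₀ - 1) + 1 = i + n₀ := by omega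
              rwa [he] at this
        have hstop : ∃ Γ ∈ pd I a (σ (i + n₀)), ∃ Δ ∈ pd I b (σ (i + n₀)),
            D _ (i + n₀) hVn = Γ ∪ Δ := by
          by_contra hc
          exact Nat.find_spec hex ⟨hVn, hc⟩
        obtain ⟨Γ, hΓ, Δ, hΔ, hDe⟩ := hstop
        have hsata : Sat I a (suffix σ (i + n₀)) := by
          refine sat_of_small (i + n₀) Γ a hsa hΓ ?_
          intro θ hθ
          exact hnext _ _ hVn θ (hDe ▸ Finset.mem_union_left _ hθ)
        have hsatbn : Sat I b (suffix σ (i + n₀)) := by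
          refine sat_of_small (i + n₀) Δ b hsb hΔ ?_
          intro θ hθ
          exact hnext _ _ hVn θ (hDe ▸ Finset.mem_union_right _ hθ)
        have hsatbj : ∀ j < n₀, Sat I b (suffix σ (i + j)) := by
          intro j hj
          obtain ⟨h, hnp⟩ := hmin j hj
          rcases branch _ h with hc | ⟨_, Δ', hΔ', hDe'⟩
          · exact absurd hc hnp
          · exact satb_of_ins _ h Δ' hΔ' hDe'
        intro n
        rcases lt_trichotomy n n₀ with hc | hc | hc
        · left; rw [suffix_suffix]; exact hsatbj n hc
        · left; rw [suffix_suffix, hc]; exact hsatbn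
        · right; exact ⟨n₀, hc, by rw [suffix_suffix]; exact hsata⟩


end LTLProof

theorem ltl_to_aa_correct' {AP S : Type} [DecidableEq AP]
    (I : S → Set AP) (φ : LTL AP) (σ : ℕ → S) :
    LTL.Sat I φ σ ↔ ∃ r : LTL.Run I φ σ, r.Accepting := by
  open LTL LTLProof in
  constructor
  · intro hsat
    -- choice of good derivatives
    have hgex : ∀ (q : LTL AP) (i : ℕ), ∃ Δ : Finset (LTL AP),
        Sat I q (suffix σ i) →
        Δ ∈ pd I q (σ i) ∧ SatConj I Δ (suffix σ (i + 1)) ∧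
          ∀ a b, q = LTL.untl a b → Sat I b (suffix σ i) → LTL.untl a b ∉ Δ := by
      intro q i
      by_cases h : Sat I q (suffix σ i)
      · obtain ⟨Δ, h1, h2, h3⟩ := pd_complete q (suffix σ i) h
        refine ⟨Δ, fun _ => ⟨?_, ?_, h3⟩⟩
        · have h0 : (suffix σ i) 0 = σ i := by simp [suffix]
          rwa [h0] at h1
        · rwa [suffix_suffix] at h2
      · exact ⟨∅, fun hs => absurd hs h⟩
    choose g hgspec using hgex
    obtain ⟨Γ₀, hΓ₀, hΓ₀sat⟩ := SIMP_complete φ σ hsat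
    let level : ℕ → Finset (LTL AP) :=
      fun n => Nat.rec Γ₀ (fun i L => L.biUnion (fun q => g q i)) n
    have level_zero : level 0 = Γ₀ := rfl
    have level_succ : ∀ i, level (i + 1) = (level i).biUnion (fun q => g q i) := fun _ => rfl
    have hsatlev : ∀ i q, q ∈ level i → Sat I q (suffix σ i) := by
      intro i
      induction i with
      | zero =>
        intro q hq
        rw [suffix_zero]
        exact hΓ₀sat q hq
      | succ i ihi =>
        intro q hq
        rw [level_succ] at hq
        obtain ⟨p, hp, hq⟩ := Finset.mem_biUnion.mp hq
        exact (hgspec p i (ihi p hp)).2.1 q hq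
    have hdlev : ∀ i q, q ∈ level i → q ∈ dplus φ := by
      intro i
      induction i with
      | zero => intro q hq; exact SIMP_subset_dplus φ Γ₀ hΓ₀ hq
      | succ i ihi =>
        intro q hq
        rw [level_succ] at hq
        obtain ⟨p, hp, hq⟩ := Finset.mem_biUnion.mp hq
        exact dplus_trans φ p (ihi p hp)
          (pd_subset_dplus p (σ i) _ (hgspec p i (hsatlev i p hp)).1 hq)
    refine ⟨⟨{v | v.1 ∈ level v.2},
            {e | e.2.2 = e.1.2 + 1 ∧ e.1.1 ∈ level e.1.2 ∧ e.2.1 ∈ g e.1.1 e.1.2},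
            ?_, ?_, ?_, ?_, ?_, ?_⟩, ?_⟩
    · intro v hv
      exact hdlev v.2 v.1 hv
    · intro e he
      refine ⟨he.2.1, ?_⟩
      show e.2.1 ∈ level e.2.2
      rw [he.1, level_succ]
      exact Finset.mem_biUnion.mpr ⟨e.1.1, he.2.1, he.2.2⟩
    · intro e he
      exact he.1
    · refine ⟨Γ₀, hΓ₀, ?_⟩
      ext q
      show q ∈ level 0 ↔ _
      rw [level_zero]
      simp
    · intro q' i h
      have h' : q' ∈ level (i + 1) := h
      rw [level_succ] at h'
      obtain ⟨q, hq, hg'⟩ := Finset.mem_biUnion.mp h'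
      exact ⟨q, rfl, hq, hg'⟩
    · intro q i h
      refine ⟨g q i, (hgspec q i (hsatlev i q h)).1, ?_⟩
      ext q'
      constructor
      · intro hq'; exact hq'.2.2
      · intro hq'; exact ⟨rfl, h, hq'⟩
    · -- acceptance
      intro k π hπ m
      by_contra hno
      push_neg at hno
      have hlev : ∀ n, π n ∈ level (k + n) := fun n => (hπ n).2.1
      have hsucc : ∀ n, π (n + 1) ∈ g (π n) (k + n) := fun n => (hπ n).2.2
      have hsat' : ∀ n, Sat I (π n) (suffix σ (k + n)) := fun n => hsatlev _ _ (hlev n)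
      have hgd : ∀ n, g (π n) (k + n) ∈ pd I (π n) (σ (k + n)) :=
        fun n => (hgspec _ _ (hsat' n)).1
      have hsize1 : ∀ n, size (π (n + 1)) ≤ size (π n) :=
        fun n => pd_elem_size _ _ _ (hgd n) _ (hsucc n)
      have hsize : ∀ n₁ n₂, n₁ ≤ n₂ → size (π n₂) ≤ size (π n₁) := by
        intro n₁ n₂ h
        induction n₂, h using Nat.le_induction with
        | base => exact le_rfl
        | succ n₂ h ih => exact le_trans (hsize1 n₂) ih
      obtain ⟨m', hm'm, hconst⟩ := eventually_const (fun n => size (π n)) hsize m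
      have hnacc : ¬ IsAcc (π m') := hno m' hm'm
      have hstep_eq : ∀ n ≥ m', size (π (n + 1)) = size (π n) := by
        intro n hn
        rw [hconst (n + 1) (by omega), hconst n hn]
      cases hqm : π m' with
      | tt => rw [hqm] at hnacc; exact hnacc trivial
      | rels a b => rw [hqm] at hnacc; exact hnacc trivial
      | ff =>
        have := hsat' m'
        rw [hqm] at this
        exact this
      | conj a b =>
        have := dplus_temporal φ _ (hdlev _ _ (hlev m'))
        rw [hqm] at this
        exact this
      | disj a b =>
        have := dplus_temporal φ _ (hdlev _ _ (hlev m'))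
        rw [hqm] at this
        exact this
      | pos p =>
        have h1 := hgd m'
        have h2 := hsucc m'
        rw [hqm] at h1 h2
        simp only [pd] at h1
        split_ifs at h1 with h
        · simp only [Finset.mem_singleton] at h1
          rw [h1] at h2
          simp at h2
        · simp at h1
      | nneg p =>
        have h1 := hgd m'
        have h2 := hsucc m'
        rw [hqm] at h1 h2
        simp only [pd] at h1
        split_ifs at h1 with h
        · simp at h1
        · simp only [Finset.mem_singleton] at h1
          rw [h1] at h2
          simp at h2
      | next a =>
        have h1 := hgd m'
        rw [hqm] at h1
        simp only [pd] at h1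
        have h2' := hsucc m'
        rw [hqm] at h2'
        have h2 := SIMP_elem_size a _ h1 _ h2'
        have h3 := hstep_eq m' le_rfl
        rw [hqm] at h3
        simp [size] at h3
        omega
      | untl a b =>
        -- π is constantly untl a b from m' on, and b never satisfied
        have hconstπ : ∀ n ≥ m', π n = LTL.untl a b := by
          intro n hn
          induction n, hn using Nat.le_induction with
          | base => exact hqm
          | succ n hn ihn =>
            have h1 := hgd n
            rw [ihn] at h1
            simp only [pd, Finset.mem_union, Finset.mem_image] at h1
            have h2 := hsucc n
            rw [ihn] at h2
            have h3 := hstep_eq n hn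
            rw [ihn] at h3
            rcases h1 with h1 | ⟨Γ, hΓ, hΓe⟩
            · have := pd_elem_size b _ _ h1 _ h2
              have := size_pos a
              simp [size] at h3
              omega
            · rw [← hΓe] at h2
              rcases Finset.mem_insert.1 h2 with h | h
              · exact h
              · have := pd_elem_size a _ _ hΓ _ h
                have := size_pos b
                simp [size] at h3
                omega
        have hnob : ∀ n ≥ m', ¬ Sat I b (suffix σ (k + n)) := by
          intro n hn hb
          have hcl := (hgspec (π n) (k + n) (hsat' n)).2.2 a b (hconstπ n hn) hb
          have h2 := hsucc n
          rw [hconstπ (n + 1) (by omega)] at h2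
          exact hcl h2
        have := hsat' m'
        rw [hqm] at this
        obtain ⟨n', _, hbsat⟩ := this
        rw [suffix_suffix] at hbsat
        exact hnob (m' + n') (by omega) (by rwa [Nat.add_assoc] at hbsat)
  · intro ⟨r, hacc⟩
    obtain ⟨Γ, hΓ, hset⟩ := r.init
    have hsc : SatConj I Γ σ := by
      intro q hq
      have hv : (q, 0) ∈ r.V := by
        rw [Set.ext_iff] at hset
        exact (hset q).2 hq
      have := run_sat r hacc (size q) q 0 le_rfl hv
      rwa [suffix_zero] at this
    exact SIMP_sound φ σ Γ hΓ hsc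

/-- Correctness of the LTL-to-alternating-automaton translation:
`σ ⊨ φ` iff there is an accepting run of `A(φ)` on `σ`. -/
theorem ltl_to_aa_correct {AP S : Type} [Fintype AP] [Fintype S] [DecidableEq AP]
    (I : S → Set AP) (φ : LTL AP) (σ : ℕ → S) :
    LTL.Sat I φ σ ↔ ∃ r : LTL.Run I φ σ, r.Accepting := by
  exact ltl_to_aa_correct' I φ σ
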